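/- For k ≥ 1, the rectangle Schur polynomials s_{R_1}, …, s_{R_k}, where R_a = ((k−a+1)^a) is the a×(k−a+1) rectangular partition, are algebraically independent over ℝ as elements of the ring of symmetric functions. -/

import Mathlib

open MvPolynomial

/-- The complete homogeneous symmetric functions `h_n` viewed as generators:
`Λ_(k) = ℝ[h_1,…,h_k]` is modelled as `MvPolynomial (Fin k) ℝ`, where the
variable `X i` stands for `h_{i+1}`.  `hsym k n` is `h_n` for `1 ≤ n ≤ k`,
`1` for `n = 0` and `0` otherwise. -/
noncomputable def hsym (k : ℕ) (n : ℤ) : MvPolynomial (Fin k) ℝ :=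
  if hn : 0 < n ∧ n ≤ (k : ℤ) then X ⟨(n - 1).toNat, by omega⟩
  else if n = 0 then 1 else 0

/-- The Schur function of the rectangular partition `R_{a+1} = ((k-a)^{a+1})`
(i.e. `R_b = ((k-b+1)^b)` for `b = a+1`), defined via the Jacobi-Trudi
determinant `det (h_{λ_i - i + j})`. -/
noncomputable def sR (k : ℕ) (a : Fin k) : MvPolynomial (Fin k) ℝ :=
  (Matrix.of fun i j : Fin (a.val + 1) =>
    hsym k ((((k : ℤ) - a.val) - i.val) + j.val)).det

namespace RectAux

/-- The (doubled) concave weight function `W n = n (2k+1-n)`. -/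
def Wf (k : ℕ) (n : ℤ) : ℤ := n * (2 * (k : ℤ) + 1 - n)

/-- Weighted degree of an exponent vector, where `X i` has weight `Wf k (i+1)`. -/
def wdeg (k : ℕ) (d : Fin k →₀ ℕ) : ℤ :=
  ∑ i : Fin k, (d i : ℤ) * Wf k ((i : ℕ) + 1)

lemma wdeg_zero (k : ℕ) : wdeg k 0 = 0 := by simp [wdeg]

lemma wdeg_add {k : ℕ} (d e : Fin k →₀ ℕ) :
    wdeg k (d + e) = wdeg k d + wdeg k e := by
  simp [wdeg, Finsupp.add_apply, add_mul, Finset.sum_add_distrib]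

lemma wdeg_single {k : ℕ} (j : Fin k) (n : ℕ) :
    wdeg k (Finsupp.single j n) = (n : ℤ) * Wf k ((j : ℕ) + 1) := by
  rw [wdeg, Finset.sum_eq_single j]
  · simp
  · intro b _ hb
    simp [Finsupp.single_apply, Ne.symm hb]
  · simp

/-- `Lead f m` says that `f` has the monomial `m` with coefficient `1` and all other
monomials of strictly smaller weighted degree. -/
def Lead {k : ℕ} (f : MvPolynomial (Fin k) ℝ) (m : Fin k →₀ ℕ) : Prop :=
  ∀ e ∈ (f - monomial m 1).support, wdeg k e < wdeg k m

lemma Lead.le {k : ℕ} {f : MvPolynomial (Fin k) ℝ} {m : Fin k →₀ ℕ}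
    (hf : Lead f m) : ∀ e ∈ f.support, wdeg k e ≤ wdeg k m := by
  classical
  intro e he
  have : f = (f - monomial m 1) + monomial m 1 := by ring
  rw [this] at he
  rcases Finset.mem_union.mp (support_add he) with h | h
  · exact (hf e h).le
  · rw [support_monomial, if_neg one_ne_zero] at h
    rw [Finset.mem_singleton.mp h]

lemma Lead.one {k : ℕ} : Lead (1 : MvPolynomial (Fin k) ℝ) 0 := by
  intro e he
  rw [monomial_zero', C_1, sub_self] at he
  simp at he

lemma Lead.mul {k : ℕ} {f g : MvPolynomial (Fin k) ℝ} {m n : Fin k →₀ ℕ}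
    (hf : Lead f m) (hg : Lead g n) : Lead (f * g) (m + n) := by
  classical
  intro e he
  have key : f * g - monomial (m + n) 1 =
      (f - monomial m 1) * g + monomial m 1 * (g - monomial n 1) := by
    have : monomial m (1 : ℝ) * monomial n 1 = monomial (m + n) 1 := by
      rw [monomial_mul, one_mul]
    rw [← this]; ring
  rw [key] at he
  rcases Finset.mem_union.mp (support_add he) with h | h
  · obtain ⟨e1, h1, e2, h2, rfl⟩ := Finset.mem_add.mp (support_mul _ _ h)
    rw [wdeg_add, wdeg_add]
    exact add_lt_add_of_lt_of_le (hf e1 h1) (hg.le e2 h2)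
  · obtain ⟨e1, h1, e2, h2, rfl⟩ := Finset.mem_add.mp (support_mul _ _ h)
    rw [support_monomial, if_neg one_ne_zero, Finset.mem_singleton] at h1
    subst h1
    rw [wdeg_add, wdeg_add]
    exact add_lt_add_right (hg e2 h2) _

lemma Lead.pow {k : ℕ} {f : MvPolynomial (Fin k) ℝ} {m : Fin k →₀ ℕ}
    (hf : Lead f m) (n : ℕ) : Lead (f ^ n) (n • m) := by
  induction n with
  | zero => simpa using Lead.one
  | succ n ih =>
    rw [pow_succ, succ_nsmul]
    exact ih.mul hf

lemma Lead.prod {k : ℕ} {ι : Type*} (s : Finset ι)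
    (f : ι → MvPolynomial (Fin k) ℝ) (m : ι → (Fin k →₀ ℕ))
    (h : ∀ i ∈ s, Lead (f i) (m i)) :
    Lead (∏ i ∈ s, f i) (∑ i ∈ s, m i) := by
  classical
  induction s using Finset.cons_induction with
  | empty => simpa using Lead.one
  | cons a s ha ih =>
    rw [Finset.prod_cons, Finset.sum_cons]
    exact (h a (Finset.mem_cons_self a s)).mul
      (ih fun i hi => h i (Finset.mem_cons_of_mem hi))

lemma wdeg_of_mem_hsym {k : ℕ} {n : ℤ} {e : Fin k →₀ ℕ}
    (he : e ∈ (hsym k n).support) : wdeg k e = Wf k n := by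
  classical
  unfold hsym at he
  split_ifs at he with h1 h2
  · rw [support_X, Finset.mem_singleton] at he
    subst he
    rw [wdeg_single]
    have h3 : ((((⟨(n - 1).toNat, by omega⟩ : Fin k) : ℕ) : ℤ) + 1) = n := by
      simp only [Fin.val_mk]; omega
    rw [h3]
    simp
  · have h1 : (1 : MvPolynomial (Fin k) ℝ) = monomial 0 1 := by
      rw [← C_1]; exact (congrFun monomial_zero' (1 : ℝ)).symm
    rw [h1, support_monomial, if_neg one_ne_zero, Finset.mem_singleton] at he
    subst he
    rw [wdeg_zero, h2, Wf]
    ring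
  · simp at he

lemma wdeg_support_prod {k : ℕ} {ι : Type*} (s : Finset ι)
    (f : ι → MvPolynomial (Fin k) ℝ) (v : ι → ℤ)
    (hv : ∀ i ∈ s, ∀ e ∈ (f i).support, wdeg k e = v i) :
    ∀ e ∈ (∏ i ∈ s, f i).support, wdeg k e = ∑ i ∈ s, v i := by
  classical
  induction s using Finset.cons_induction with
  | empty =>
    intro e he
    rw [Finset.prod_empty] at he
    have h1 : (1 : MvPolynomial (Fin k) ℝ) = monomial 0 1 := by
      rw [← C_1]; exact (congrFun monomial_zero' (1 : ℝ)).symm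
    rw [h1, support_monomial, if_neg one_ne_zero, Finset.mem_singleton] at he
    subst he
    simp [wdeg_zero]
  | cons a s ha ih =>
    intro e he
    rw [Finset.prod_cons] at he
    obtain ⟨e1, h1, e2, h2, rfl⟩ := Finset.mem_add.mp (support_mul _ _ he)
    rw [wdeg_add, Finset.sum_cons,
      hv a (Finset.mem_cons_self a s) e1 h1,
      ih (fun i hi => hv i (Finset.mem_cons_of_mem hi)) e2 h2]

lemma sum_Wf_lt {k : ℕ} (c : ℤ) {m : ℕ} (σ : Equiv.Perm (Fin m))
    (hσ : σ ≠ 1) :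
    ∑ i : Fin m, Wf k (c - ((σ i : ℕ) : ℤ) + ((i : ℕ) : ℤ)) < (m : ℤ) * Wf k c := by
  have expand : ∀ i : Fin m,
      Wf k (c - ((σ i : ℕ) : ℤ) + ((i : ℕ) : ℤ)) =
        Wf k c + (((i : ℕ) : ℤ) - ((σ i : ℕ) : ℤ)) * (2 * (k : ℤ) + 1 - 2 * c)
          - (((i : ℕ) : ℤ) - ((σ i : ℕ) : ℤ)) ^ 2 := by
    intro i; unfold Wf; ring
  rw [Finset.sum_congr rfl fun i _ => expand i]
  rw [Finset.sum_sub_distrib, Finset.sum_add_distrib, Finset.sum_const,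
    Finset.card_univ, Fintype.card_fin, ← Finset.sum_mul]
  have hsum : (∑ i : Fin m, (((i : ℕ) : ℤ) - ((σ i : ℕ) : ℤ))) = 0 := by
    rw [Finset.sum_sub_distrib]
    rw [Equiv.sum_comp σ (fun i : Fin m => ((i : ℕ) : ℤ))]
    ring
  rw [hsum, zero_mul, add_zero, nsmul_eq_mul]
  have hpos : 0 < ∑ i : Fin m, (((i : ℕ) : ℤ) - ((σ i : ℕ) : ℤ)) ^ 2 := by
    obtain ⟨i, hi⟩ : ∃ i, σ i ≠ i := by
      by_contra h
      push_neg at h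
      exact hσ (Equiv.ext h)
    apply Finset.sum_pos' (fun j _ => sq_nonneg _) ⟨i, Finset.mem_univ i, ?_⟩
    have : ((i : ℕ) : ℤ) ≠ ((σ i : ℕ) : ℤ) := by
      intro h
      exact hi (Fin.ext (by exact_mod_cast h.symm))
    exact lt_of_le_of_ne (sq_nonneg _) (Ne.symm (pow_ne_zero 2 (sub_ne_zero.mpr this)))
  omega

lemma lead_sR {k : ℕ} (a : Fin k) :
    Lead (sR k a) (Finsupp.single ⟨k - 1 - a.val, by omega⟩ (a.val + 1)) := by
  classical
  have hak : a.val < k := a.isLt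
  set c : ℤ := (k : ℤ) - a.val with hc
  set j0 : Fin k := ⟨k - 1 - a.val, by omega⟩ with hj0
  set M : Fin k →₀ ℕ := Finsupp.single j0 (a.val + 1) with hM
  -- the identity permutation's term is the monomial `M`
  have hdiag : (∏ i : Fin (a.val + 1), hsym k (c - ((i : ℕ) : ℤ) + ((i : ℕ) : ℤ)))
      = monomial M 1 := by
    have h1 : ∀ i : Fin (a.val + 1),
        hsym k (c - ((i : ℕ) : ℤ) + ((i : ℕ) : ℤ)) = X j0 := by
      intro i
      have hcond : 0 < c - ((i : ℕ) : ℤ) + ((i : ℕ) : ℤ) ∧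
          c - ((i : ℕ) : ℤ) + ((i : ℕ) : ℤ) ≤ (k : ℤ) := by omega
      rw [hsym, dif_pos hcond]
      congr 1
      apply Fin.ext
      show (c - ((i : ℕ) : ℤ) + ((i : ℕ) : ℤ) - 1).toNat = k - 1 - a.val
      omega
    rw [Finset.prod_congr rfl fun i _ => h1 i, Finset.prod_const,
      Finset.card_univ, Fintype.card_fin, X_pow_eq_monomial]
  have hwM : wdeg k M = ((a.val : ℤ) + 1) * Wf k c := by
    rw [hM, wdeg_single]
    have h1 : (((j0 : ℕ) : ℤ) + 1) = c := by
      rw [hj0]; simp only [Fin.val_mk]; omega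
    rw [h1]
    push_cast
    ring
  -- expand the determinant
  intro e he
  have hdet : sR k a - monomial M 1 =
      ∑ σ ∈ (Finset.univ.erase (1 : Equiv.Perm (Fin (a.val + 1)))),
        Equiv.Perm.sign σ •
          ∏ i : Fin (a.val + 1), hsym k (c - ((σ i : ℕ) : ℤ) + ((i : ℕ) : ℤ)) := by
    rw [sR, Matrix.det_apply]
    rw [← Finset.sum_erase_add _ _ (Finset.mem_univ (1 : Equiv.Perm (Fin (a.val + 1))))]
    simp only [Equiv.Perm.sign_one, one_smul, Equiv.Perm.one_apply, Matrix.of_apply]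
    rw [show (∏ i : Fin (a.val + 1), hsym k ((((k : ℤ) - a.val) - ((i : ℕ) : ℤ)) + ((i : ℕ) : ℤ)))
        = monomial M 1 from hdiag]
    rw [add_sub_cancel_right]
  rw [hdet] at he
  obtain ⟨σ, hσmem, hσe⟩ := Finset.mem_biUnion.mp (support_sum he)
  have hσ1 : σ ≠ 1 := (Finset.mem_erase.mp hσmem).1
  have hesupp : e ∈ (∏ i : Fin (a.val + 1),
      hsym k (c - ((σ i : ℕ) : ℤ) + ((i : ℕ) : ℤ))).support :=
    support_smul hσe
  have hwe : wdeg k e = ∑ i : Fin (a.val + 1), Wf k (c - ((σ i : ℕ) : ℤ) + ((i : ℕ) : ℤ)) :=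
    wdeg_support_prod Finset.univ _ _ (fun i _ e' he' => wdeg_of_mem_hsym he') e hesupp
  rw [hwe, hwM]
  have := sum_Wf_lt (k := k) c σ hσ1
  calc (∑ i : Fin (a.val + 1), Wf k (c - ((σ i : ℕ) : ℤ) + ((i : ℕ) : ℤ)))
      < ((a.val + 1 : ℕ) : ℤ) * Wf k c := this
    _ = ((a.val : ℤ) + 1) * Wf k c := by push_cast; ring

end RectAux

open RectAux in
/-- for `k ≥ 1` the rectangle Schur functions `s_{R_1},…,s_{R_k}`
are algebraically independent over `ℝ`. -/
theorem rectangle_schur_algebraically_independent (k : ℕ) (hk : 1 ≤ k) :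
    AlgebraicIndependent ℝ (sR k) := by
  classical
  rw [algebraicIndependent_iff]
  intro p hp
  by_contra hpne
  set M : Fin k → (Fin k →₀ ℕ) :=
    fun a => Finsupp.single ⟨k - 1 - a.val, by omega⟩ (a.val + 1) with hMdef
  set E : (Fin k →₀ ℕ) → (Fin k →₀ ℕ) := fun d => ∑ a : Fin k, d a • M a with hEdef
  -- E is injective
  have hEapp : ∀ (d : Fin k →₀ ℕ) (a : Fin k),
      E d ⟨k - 1 - a.val, by omega⟩ = d a * (a.val + 1) := by
    intro d a
    rw [hEdef]
    rw [Finsupp.finset_sum_apply]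
    rw [Finset.sum_eq_single a]
    · simp [hMdef, mul_add, mul_one]
    · intro b _ hb
      have hb' := b.isLt; have ha' := a.isLt
      have hne : (⟨k - 1 - b.val, by omega⟩ : Fin k) ≠ ⟨k - 1 - a.val, by omega⟩ := by
        intro h
        rw [Fin.mk.injEq] at h
        exact hb (Fin.ext (by omega))
      simp [hMdef, Finsupp.single_apply, hne]
    · simp
  have hEinj : ∀ d d' : Fin k →₀ ℕ, E d = E d' → d = d' := by
    intro d d' h
    ext a
    have := hEapp d a
    rw [h, hEapp d' a] at this
    exact Nat.eq_of_mul_eq_mul_right (Nat.succ_pos _) this.symm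
  -- Lead for products of powers of sR
  have hlead : ∀ d : Fin k →₀ ℕ, Lead (∏ a : Fin k, sR k a ^ d a) (E d) := by
    intro d
    exact Lead.prod Finset.univ _ _ (fun a _ => (lead_sR a).pow (d a))
  -- pick a maximizer of the weighted degree
  have hsupp : p.support.Nonempty := Finset.nonempty_iff_ne_empty.mpr (fun h => hpne (MvPolynomial.support_eq_empty.mp h))
  obtain ⟨d0, hd0mem, hd0max⟩ :=
    p.support.exists_max_image (fun d => wdeg k (E d)) hsupp
  -- coefficient of E d0 in the image
  have hcoeff : ∀ d ∈ p.support,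
      coeff (E d0) (∏ a : Fin k, sR k a ^ d a) = if d = d0 then 1 else 0 := by
    intro d hd
    have hL := hlead d
    have hsplit : (∏ a : Fin k, sR k a ^ d a) =
        monomial (E d) 1 + ((∏ a : Fin k, sR k a ^ d a) - monomial (E d) 1) := by ring
    rw [hsplit, coeff_add, coeff_monomial]
    have hzero : coeff (E d0) ((∏ a : Fin k, sR k a ^ d a) - monomial (E d) 1) = 0 := by
      by_contra h
      have hmem : E d0 ∈ ((∏ a : Fin k, sR k a ^ d a) - monomial (E d) 1).support :=
        mem_support_iff.mpr h
      have h1 := hL (E d0) hmem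
      have h2 := hd0max d hd
      omega
    rw [hzero, add_zero]
    by_cases h : d = d0
    · subst h; simp
    · rw [if_neg h, if_neg (fun he => h (hEinj d d0 he))]
  -- expand aeval
  have hexp : (MvPolynomial.aeval (sR k)) p =
      ∑ d ∈ p.support, MvPolynomial.C (coeff d p) * ∏ a : Fin k, sR k a ^ d a := by
    rw [MvPolynomial.aeval_def, MvPolynomial.eval₂_eq]
    apply Finset.sum_congr rfl
    intro d _
    congr 1
    exact Finset.prod_subset (Finset.subset_univ d.support)
      (fun x _ hx => by rw [Finsupp.notMem_support_iff.mp hx, pow_zero])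
  have hfinal : coeff (E d0) ((MvPolynomial.aeval (sR k)) p) = coeff d0 p := by
    rw [hexp, coeff_sum]
    rw [Finset.sum_congr rfl (fun d hd => by
      rw [coeff_C_mul, hcoeff d hd])]
    rw [Finset.sum_congr rfl (fun d hd => by
      rw [mul_ite, mul_one, mul_zero]), Finset.sum_ite_eq' p.support d0 (fun d => coeff d p),
      if_pos hd0mem]
  rw [hp, coeff_zero] at hfinal
  exact (mem_support_iff.mp hd0mem) hfinal.symm
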